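/- (Existence of Scholte waves.) For any positive real numbers ρ_s, μ_s, λ_s, ρ_f, λ_f, setting c_s² = μ_s/ρ_s, c_p² = (λ_s + 2μ_s)/ρ_s and c_f² = λ_f/ρ_f, there exists a real number z with 0 < z < min{c_s², c_f²} such that z²ρ_s√(1 − z/c_p²) + ρ_f⁻¹√(1 − z/c_f²)·((2μ_s − ρ_s z)² − 4μ_s²√(1 − z/c_s²)·√(1 − z/c_p²)) = 0. (The square root z = c_Sc of such a root is the Scholte wave speed, satisfying 0 < c_Sc < min{c_s, c_f}.) -/

import Mathlib

lemma sqrt_one_sub_deriv (a : ℝ) (_ha : a ≠ 0) :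
    HasDerivAt (fun z : ℝ => Real.sqrt (1 - z / a)) (-(1/(2*a))) 0 := by
  have hinner : HasDerivAt (fun z : ℝ => 1 - z / a) (-(1/a)) 0 := by
    simpa using ((hasDerivAt_id (0:ℝ)).div_const a).const_sub 1
  have h := (Real.hasDerivAt_sqrt (x := 1 - 0 / a) (by norm_num)).comp 0 hinner
  refine h.congr_deriv ?_
  simp [Real.sqrt_one]
  ring

theorem exists_scholte_root
    (rhos mus lams rhof lamf : ℝ)
    (hrhos : 0 < rhos) (hmus : 0 < mus) (hlams : 0 < lams)
    (hrhof : 0 < rhof) (hlamf : 0 < lamf)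
    (cs2 cp2 cf2 : ℝ)
    (hcs2 : cs2 = mus / rhos)
    (hcp2 : cp2 = (lams + 2 * mus) / rhos)
    (hcf2 : cf2 = lamf / rhof) :
    ∃ z : ℝ, 0 < z ∧ z < min cs2 cf2 ∧
      z ^ 2 * rhos * Real.sqrt (1 - z / cp2)
        + rhof⁻¹ * Real.sqrt (1 - z / cf2)
          * ((2 * mus - rhos * z) ^ 2
            - 4 * mus ^ 2 * Real.sqrt (1 - z / cs2) * Real.sqrt (1 - z / cp2)) = 0 := by
  set F : ℝ → ℝ := fun z => z ^ 2 * rhos * Real.sqrt (1 - z / cp2)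
        + rhof⁻¹ * Real.sqrt (1 - z / cf2)
          * ((2 * mus - rhos * z) ^ 2
            - 4 * mus ^ 2 * Real.sqrt (1 - z / cs2) * Real.sqrt (1 - z / cp2)) with hFdef
  have hcs2pos : 0 < cs2 := by rw [hcs2]; positivity
  have hcp2pos : 0 < cp2 := by rw [hcp2]; positivity
  have hcf2pos : 0 < cf2 := by rw [hcf2]; positivity
  have hcsltcp : cs2 < cp2 := by
    rw [hcs2, hcp2]
    gcongr
    linarith
  set m := min cs2 cf2 with hm
  have hmpos : 0 < m := lt_min hcs2pos hcf2pos
  have hmlecs : m ≤ cs2 := min_le_left _ _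
  have hmltcp : m < cp2 := lt_of_le_of_lt hmlecs hcsltcp
  -- F m > 0
  have hFm : 0 < F m := by
    have h1 : 0 < m ^ 2 * rhos * Real.sqrt (1 - m / cp2) := by
      have : 0 < 1 - m / cp2 := by
        rw [sub_pos, div_lt_one hcp2pos]; exact hmltcp
      positivity
    have h2 : 0 ≤ rhof⁻¹ * Real.sqrt (1 - m / cf2)
          * ((2 * mus - rhos * m) ^ 2
            - 4 * mus ^ 2 * Real.sqrt (1 - m / cs2) * Real.sqrt (1 - m / cp2)) := by
      rcases le_total cs2 cf2 with h | h
      · have hmeq : m = cs2 := min_eq_left h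
        have : Real.sqrt (1 - m / cs2) = 0 := by
          rw [hmeq, div_self hcs2pos.ne', sub_self, Real.sqrt_zero]
        rw [this]
        simp only [mul_zero, zero_mul, sub_zero]
        positivity
      · have hmeq : m = cf2 := min_eq_right h
        have : Real.sqrt (1 - m / cf2) = 0 := by
          rw [hmeq, div_self hcf2pos.ne', sub_self, Real.sqrt_zero]
        rw [this]
        simp
    simp only [hFdef]
    linarith
  -- derivative of F at 0
  have hp := sqrt_one_sub_deriv cp2 hcp2pos.ne'
  have hs := sqrt_one_sub_deriv cs2 hcs2pos.ne'
  have hf := sqrt_one_sub_deriv cf2 hcf2pos.ne'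
  have h1 := ((hasDerivAt_pow 2 (0:ℝ)).mul_const rhos).mul hp
  have hlin : HasDerivAt (fun z : ℝ => 2 * mus - rhos * z) (-rhos) 0 := by
    simpa using ((hasDerivAt_id (0:ℝ)).const_mul rhos).const_sub (2*mus)
  have hsq := hlin.pow 2
  have hprod := (hs.const_mul (4 * mus ^ 2)).mul hp
  have hA := hsq.sub hprod
  have h2 := (hf.const_mul rhof⁻¹).mul hA
  have hder := h1.add h2
  norm_num [Real.sqrt_one] at hder
  set D : ℝ := -(rhof⁻¹ * (cf2⁻¹ * (1 / 2)) * ((2 * mus) ^ 2 - 4 * mus ^ 2)) +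
      rhof⁻¹ * (-(2 * (2 * mus) * rhos) -
        (-(4 * mus ^ 2 * (cs2⁻¹ * (1 / 2))) + -(4 * mus ^ 2 * (cp2⁻¹ * (1 / 2))))) with hD
  have hdneg : D < 0 := by
    rw [hD, hcs2, hcp2, inv_div, inv_div]
    have hlm : (0:ℝ) < lams + 2 * mus := by linarith
    have key : -(rhof⁻¹ * (cf2⁻¹ * (1 / 2)) * ((2 * mus) ^ 2 - 4 * mus ^ 2)) +
        rhof⁻¹ * (-(2 * (2 * mus) * rhos) -
          (-(4 * mus ^ 2 * (rhos / mus * (1 / 2))) +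
            -(4 * mus ^ 2 * (rhos / (lams + 2 * mus) * (1 / 2)))))
        = rhof⁻¹ * (2 * mus ^ 2 * rhos / (lams + 2 * mus) - 2 * mus * rhos) := by
      field_simp
      ring
    rw [key]
    apply mul_neg_of_pos_of_neg (inv_pos.mpr hrhof)
    rw [sub_neg, div_lt_iff₀ hlm]
    nlinarith [mul_pos (mul_pos hmus hrhos) (show (0:ℝ) < lams + mus by linarith)]
  have hderF : HasDerivAt F D 0 := hder
  -- slope tendsto
  have hsl : Filter.Tendsto (slope F 0) (nhdsWithin 0 (Set.Ioi 0)) (nhds D) :=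
    (hasDerivAt_iff_tendsto_slope.mp hderF).mono_left
      (nhdsWithin_mono 0 (fun x hx => ne_of_gt hx))
  have hneg : ∀ᶠ z in nhdsWithin 0 (Set.Ioi 0), slope F 0 z < 0 :=
    hsl.eventually (gt_mem_nhds hdneg)
  have hmem : ∀ᶠ z in nhdsWithin (0:ℝ) (Set.Ioi 0), z ∈ Set.Ioo 0 m :=
    Ioo_mem_nhdsGT_of_mem ⟨le_refl 0, hmpos⟩
  obtain ⟨z0, hz0s, hz0m⟩ := (hneg.and hmem).exists
  have hz0pos : 0 < z0 := hz0m.1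
  have hF0 : F 0 = 0 := by
    simp only [hFdef]
    norm_num [Real.sqrt_one]
    right; ring
  have hslope : F z0 / z0 < 0 := by
    have : slope F 0 z0 = F z0 / z0 := by
      rw [slope_def_field, hF0]; ring_nf
    rwa [this] at hz0s
  have hFz0 : F z0 < 0 := by
    have h := mul_neg_of_neg_of_pos hslope hz0pos
    rwa [div_mul_cancel₀ _ hz0pos.ne'] at h
  have hcont : ContinuousOn F (Set.Icc z0 m) := by
    apply Continuous.continuousOn
    rw [hFdef]
    fun_prop
  obtain ⟨c, hc, hFc⟩ := intermediate_value_Icc (le_of_lt hz0m.2) hcont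
    ⟨le_of_lt hFz0, le_of_lt hFm⟩
  refine ⟨c, lt_of_lt_of_le hz0pos hc.1, ?_, ?_⟩
  · rcases lt_or_eq_of_le hc.2 with h | h
    · exact h
    · exfalso; rw [h] at hFc; linarith
  · exact hFc
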